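/- arXiv:1603.01799 — 2 statements merged into one kernel-verified Lean document; each statement's English description precedes it below -/
import Mathlib

section
/- Let B_n ⊂ ℝ^n be the Euclidean ball of radius √n centered at the origin, let g = 1_{B_n}, and for t > 0 and y ∈ ℝ^n let g_{t,y}(x) = g(√(1−e^{−2t}) x + e^{−t} y). Then for every t > 0 and every half-space A ⊆ ℝ^n, E_{Y∼γ_n}[ Cov(g_{t,Y}, 1_A)² ] ≤ 1/n. -/
open MeasureTheory Real

noncomputable def gauss (n : ℕ) : Measure (Fin n → ℝ) :=
  Measure.pi fun _ => ProbabilityTheory.gaussianReal 0 1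

/-- Expectation with respect to the standard Gaussian measure on `ℝ^n`. -/
noncomputable def gExp (n : ℕ) (f : (Fin n → ℝ) → ℝ) : ℝ := ∫ x, f x ∂(gauss n)

/-- Covariance with respect to the standard Gaussian measure on `ℝ^n`. -/
noncomputable def gCov (n : ℕ) (f g : (Fin n → ℝ) → ℝ) : ℝ :=
  gExp n (fun x => (f x - gExp n f) * (g x - gExp n g))

/-- Variance with respect to the standard Gaussian measure on `ℝ^n`. -/
noncomputable def gVar (n : ℕ) (f : (Fin n → ℝ) → ℝ) : ℝ := gCov n f f

/-- A half-space `{x : ⟨x, a⟩ ≤ b}` in `ℝ^n`. -/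
def IsHalfspace {n : ℕ} (A : Set (Fin n → ℝ)) : Prop :=
  ∃ (a : Fin n → ℝ) (b : ℝ), A = {x | ∑ i, x i * a i ≤ b}

/-- The Ornstein--Uhlenbeck semigroup `P_t`. -/
noncomputable def ou (n : ℕ) (t : ℝ) (f : (Fin n → ℝ) → ℝ) : (Fin n → ℝ) → ℝ :=
  fun x => ∫ y, f (fun i => Real.exp (-t) * x i + Real.sqrt (1 - Real.exp (-2*t)) * y i)
    ∂(gauss n)

/-- The shifted/rescaled function `f_{t,y}(x) = f(√(1-e^{-2t}) x + e^{-t} y)`. -/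
noncomputable def shift (n : ℕ) (f : (Fin n → ℝ) → ℝ) (t : ℝ) (y : Fin n → ℝ) :
    (Fin n → ℝ) → ℝ :=
  fun x => f (fun i => Real.sqrt (1 - Real.exp (-2*t)) * x i + Real.exp (-t) * y i)

/-- `M(g)`: the supremum over half-spaces `A` of `Cov(g, 1_A)`. -/
noncomputable def Mg (n : ℕ) (g : (Fin n → ℝ) → ℝ) : ℝ :=
  ⨆ A : {A : Set (Fin n → ℝ) // IsHalfspace A}, gCov n g (Set.indicator A.1 1)

/-- `w₁(f) = Σ_i (E[X_i f(X)])²`. -/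
noncomputable def w1g (n : ℕ) (f : (Fin n → ℝ) → ℝ) : ℝ :=
  ∑ i : Fin n, (gExp n (fun x => x i * f x)) ^ 2


open ProbabilityTheory

instance gaussProb (n : ℕ) : IsProbabilityMeasure (gauss n) := by unfold gauss; infer_instance

lemma lintegral_pi_prod : ∀ (n : ℕ) (μ : Fin n → Measure ℝ), (∀ i, SigmaFinite (μ i)) →
    ∀ (f : Fin n → ℝ → ENNReal), (∀ i, Measurable (f i)) →
    ∫⁻ x, ∏ i, f i (x i) ∂Measure.pi μ = ∏ i, ∫⁻ t, f i t ∂(μ i) := by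
  intro n
  induction n with
  | zero =>
    intro μ _ f _
    simp [Measure.pi_of_empty]
  | succ n ih =>
    intro μ hσ f hf
    have hmeas : Measurable fun x : Fin (n+1) → ℝ => ∏ i, f i (x i) :=
      Finset.measurable_prod _ fun i _ => (hf i).comp (measurable_pi_apply i)
    have := (MeasurePreserving.symm (MeasurableEquiv.piFinSuccAbove (fun _ => ℝ) 0) (measurePreserving_piFinSuccAbove μ 0)).lintegral_comp hmeas
    rw [← this]
    simp_rw [MeasurableEquiv.piFinSuccAbove_symm_apply, Fin.insertNthEquiv,
      Fin.prod_univ_succ, Fin.insertNth_zero, Equiv.coe_fn_mk, Fin.cons_succ, Fin.cons_zero,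
      Fin.zero_succAbove, cast_eq]
    rw [lintegral_prod_mul (μ := μ 0) (ν := Measure.pi fun j => μ j.succ) (f := f 0)
      (g := fun v : Fin n → ℝ => ∏ x : Fin n, f x.succ (v x)) (hf 0).aemeasurable
      (Finset.measurable_prod _ fun i _ => (hf i.succ).comp (measurable_pi_apply i)).aemeasurable]
    rw [ih (fun j => μ j.succ) (fun j => hσ j.succ) (fun j => f j.succ) (fun j => hf j.succ)]

lemma gauss_eq (n : ℕ) : gauss n =
    (Measure.pi fun _ : Fin n => (volume : Measure ℝ)).withDensity
      (fun x => ∏ i, gaussianPDF 0 1 (x i)) := by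
  refine Measure.pi_eq fun s hs => ?_
  rw [withDensity_apply _ (MeasurableSet.univ_pi hs),
    ← lintegral_indicator (MeasurableSet.univ_pi hs)]
  have hind : (Set.univ.pi s).indicator (fun x : Fin n → ℝ => ∏ i, gaussianPDF 0 1 (x i)) =
      fun x => ∏ i, (s i).indicator (gaussianPDF 0 1) (x i) := by
    funext x
    by_cases hx : x ∈ Set.univ.pi s
    · rw [Set.indicator_of_mem hx]
      exact Finset.prod_congr rfl fun i _ =>
        (Set.indicator_of_mem (hx i (Set.mem_univ i)) _).symm
    · rw [Set.indicator_of_notMem hx]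
      rw [Set.mem_univ_pi] at hx
      push_neg at hx
      obtain ⟨i, hi⟩ := hx
      exact (Finset.prod_eq_zero (Finset.mem_univ i)
        (by rw [Set.indicator_of_notMem hi])).symm
  rw [hind, lintegral_pi_prod n _ (fun _ => inferInstance) _
    (fun i => (measurable_gaussianPDF 0 1).indicator (hs i))]
  refine Finset.prod_congr rfl fun i _ => ?_
  rw [lintegral_indicator (hs i), ← withDensity_apply _ (hs i),
    ← gaussianReal_of_var_ne_zero 0 one_ne_zero]

lemma prod_gaussianPDF {n : ℕ} (x : Fin n → ℝ) :
    ∏ i, gaussianPDF 0 1 (x i) =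
      ENNReal.ofReal ((√(2 * π))⁻¹ ^ n * rexp (-(∑ i, (x i) ^ 2) / 2)) := by
  have h : ∀ i : Fin n, gaussianPDF 0 1 (x i) =
      ENNReal.ofReal ((√(2 * π))⁻¹ * rexp (-(x i) ^ 2 / 2)) := by
    intro i
    simp [gaussianPDF, gaussianPDFReal]
  simp_rw [h]
  rw [← ENNReal.ofReal_prod_of_nonneg (fun i _ => by positivity)]
  congr 1
  rw [Finset.prod_mul_distrib, Finset.prod_const, ← Real.exp_sum]
  congr 2
  · simp
  · rw [← Finset.sum_div, ← Finset.sum_neg_distrib]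

lemma gauss_measurePreserving {n : ℕ} (φ : (Fin n → ℝ) ≃ᵐ (Fin n → ℝ))
    (hvol : MeasurePreserving φ (Measure.pi fun _ => (volume : Measure ℝ))
      (Measure.pi fun _ => (volume : Measure ℝ)))
    (hsq : ∀ x, ∑ i, (φ x i) ^ 2 = ∑ i, (x i) ^ 2) :
    MeasurePreserving φ (gauss n) (gauss n) := by
  have hD : Measurable fun x : Fin n → ℝ => ∏ i, gaussianPDF 0 1 (x i) :=
    Finset.measurable_prod _ fun i _ =>
      (measurable_gaussianPDF 0 1).comp (measurable_pi_apply i)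
  have hDφ : ∀ x, (∏ i, gaussianPDF 0 1 (φ x i)) = ∏ i, gaussianPDF 0 1 (x i) := by
    intro x
    rw [prod_gaussianPDF, prod_gaussianPDF, hsq]
  refine ⟨φ.measurable, ?_⟩
  rw [gauss_eq]
  ext S hS
  rw [Measure.map_apply φ.measurable hS,
    withDensity_apply _ (φ.measurable hS), withDensity_apply _ hS,
    ← lintegral_indicator (φ.measurable hS), ← lintegral_indicator hS]
  have : ∀ x, (φ ⁻¹' S).indicator (fun x => ∏ i, gaussianPDF 0 1 (x i)) x =
      (S.indicator fun x => ∏ i, gaussianPDF 0 1 (x i)) (φ x) := by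
    intro x
    by_cases hx : φ x ∈ S
    · rw [Set.indicator_of_mem hx, Set.indicator_of_mem (by exact hx), hDφ]
    · rw [Set.indicator_of_notMem hx, Set.indicator_of_notMem (by exact hx)]
  simp_rw [this]
  exact hvol.lintegral_comp (hD.indicator hS)

section Rotation

variable {n : ℕ}

lemma euclid_sum_sq (z : EuclideanSpace ℝ (Fin n)) : ∑ i, (z i) ^ 2 = ‖z‖ ^ 2 := by
  rw [EuclideanSpace.norm_eq, Real.sq_sqrt (by positivity)]
  simp [Real.norm_eq_abs, sq_abs]

noncomputable def lieMEquiv (e : EuclideanSpace ℝ (Fin n) ≃ₗᵢ[ℝ] EuclideanSpace ℝ (Fin n)) :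
    (Fin n → ℝ) ≃ᵐ (Fin n → ℝ) :=
  ((MeasurableEquiv.toLp 2 (Fin n → ℝ)).trans
    e.toHomeomorph.toMeasurableEquiv).trans (MeasurableEquiv.toLp 2 (Fin n → ℝ)).symm

lemma lieMEquiv_apply (e : EuclideanSpace ℝ (Fin n) ≃ₗᵢ[ℝ] EuclideanSpace ℝ (Fin n))
    (x : Fin n → ℝ) (i : Fin n) :
    lieMEquiv e x i = e ((WithLp.equiv 2 (Fin n → ℝ)).symm x) i := rfl

lemma lieMEquiv_sum_sq (e : EuclideanSpace ℝ (Fin n) ≃ₗᵢ[ℝ] EuclideanSpace ℝ (Fin n))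
    (x : Fin n → ℝ) : ∑ i, (lieMEquiv e x i) ^ 2 = ∑ i, (x i) ^ 2 := by
  simp_rw [lieMEquiv_apply]
  rw [euclid_sum_sq, e.norm_map]
  rw [← euclid_sum_sq]
  rfl

lemma lieMEquiv_measurePreserving
    (e : EuclideanSpace ℝ (Fin n) ≃ₗᵢ[ℝ] EuclideanSpace ℝ (Fin n)) :
    MeasurePreserving (lieMEquiv e) (gauss n) (gauss n) := by
  refine gauss_measurePreserving _ ?_ (lieMEquiv_sum_sq e)
  have h1 := (EuclideanSpace.volume_preserving_symm_measurableEquiv_toLp (Fin n)).symm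
  have h2 := e.measurePreserving
  have h3 := EuclideanSpace.volume_preserving_symm_measurableEquiv_toLp (Fin n)
  have : MeasurePreserving (lieMEquiv e) (volume : Measure (Fin n → ℝ)) volume := by
    exact h3.comp (h2.comp h1)
  simpa [volume_pi] using this

lemma lieMEquiv_linear (e : EuclideanSpace ℝ (Fin n) ≃ₗᵢ[ℝ] EuclideanSpace ℝ (Fin n))
    (c d : ℝ) (x y : Fin n → ℝ) (i : Fin n) :
    lieMEquiv e (fun j => c * x j + d * y j) i = c * lieMEquiv e x i + d * lieMEquiv e y i := by
  have hxy : (WithLp.equiv 2 (Fin n → ℝ)).symm (fun j => c * x j + d * y j) =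
      c • (WithLp.equiv 2 (Fin n → ℝ)).symm x + d • (WithLp.equiv 2 (Fin n → ℝ)).symm y := by
    ext j
    simp [WithLp.equiv_symm_apply]
  simp_rw [lieMEquiv_apply, hxy, map_add, _root_.map_smul]
  simp [PiLp.add_apply, PiLp.smul_apply]

end Rotation

lemma exists_phi {n : ℕ} (a : Fin n → ℝ) (ha : a ≠ 0) :
    ∃ r : ℝ, 0 < r ∧ ∀ i : Fin n, ∃ φ : (Fin n → ℝ) ≃ᵐ (Fin n → ℝ),
      MeasurePreserving φ (gauss n) (gauss n) ∧
      (∀ (c d : ℝ) (x y : Fin n → ℝ) (j : Fin n),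
        φ (fun k => c * x k + d * y k) j = c * φ x j + d * φ y j) ∧
      (∀ x, ∑ j, (φ x j) ^ 2 = ∑ j, (x j) ^ 2) ∧
      (∀ x, ∑ j, (φ x j) * a j = r * x i) := by
  classical
  set a' : EuclideanSpace ℝ (Fin n) := (WithLp.equiv 2 (Fin n → ℝ)).symm a with ha'
  have ha'0 : a' ≠ 0 := by
    intro h
    apply ha
    funext j
    have := congrFun (congrArg (fun v : EuclideanSpace ℝ (Fin n) => (v : Fin n → ℝ)) h) j
    simpa [WithLp.equiv_symm_apply, ha'] using this
  have hnorm : 0 < ‖a'‖ := norm_pos_iff.mpr ha'0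
  set u : EuclideanSpace ℝ (Fin n) := ‖a'‖⁻¹ • a' with hu
  have hu1 : ‖u‖ = 1 := by
    rw [hu, norm_smul, norm_inv, norm_norm, inv_mul_cancel₀ hnorm.ne']
  refine ⟨‖a'‖, hnorm, fun i => ?_⟩
  set ei : EuclideanSpace ℝ (Fin n) := EuclideanSpace.single i 1 with hei
  have hei1 : ‖ei‖ = 1 := by rw [hei, EuclideanSpace.norm_single, norm_one]
  set R := Submodule.reflection (ℝ ∙ (u - ei))ᗮ with hR
  have hRu : R u = ei := Submodule.reflection_sub (by rw [hu1, hei1])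
  have hRei : R ei = u := by
    have := congrArg R hRu
    rw [hR] at this
    rw [Submodule.reflection_reflection] at this
    exact this.symm
  have hinner : ∀ v w : EuclideanSpace ℝ (Fin n), (inner ℝ v w : ℝ) = ∑ j, v j * w j := by
    intro v w
    rw [PiLp.inner_apply]
    simp [RCLike.inner_apply, conj_trivial, mul_comm]
  refine ⟨lieMEquiv R, lieMEquiv_measurePreserving R, lieMEquiv_linear R,
    lieMEquiv_sum_sq R, fun x => ?_⟩
  have h1 : ∑ j, (lieMEquiv R x j) * a j =
      (inner ℝ (R ((WithLp.equiv 2 (Fin n → ℝ)).symm x)) a' : ℝ) := by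
    rw [hinner]
    exact Finset.sum_congr rfl fun j _ => rfl
  rw [h1]
  have ha'u : a' = ‖a'‖ • u := by
    rw [hu, smul_smul, mul_inv_cancel₀ hnorm.ne', one_smul]
  have h2 : (inner ℝ (R ((WithLp.equiv 2 (Fin n → ℝ)).symm x)) a' : ℝ) =
      ‖a'‖ * inner ℝ (R ((WithLp.equiv 2 (Fin n → ℝ)).symm x)) u := by
    conv_lhs => rw [ha'u]
    rw [real_inner_smul_right]
  rw [h2]
  congr 1
  have : (inner ℝ (R ((WithLp.equiv 2 (Fin n → ℝ)).symm x)) u : ℝ) =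
      (inner ℝ (R ((WithLp.equiv 2 (Fin n → ℝ)).symm x)) (R ei) : ℝ) := by rw [hRei]
  rw [this, LinearIsometryEquiv.inner_map_map, hinner]
  simp [hei, EuclideanSpace.single_apply, WithLp.equiv_symm_apply]

section Basics

variable {n : ℕ}

lemma integrable_bdd {f : (Fin n → ℝ) → ℝ} (hm : AEStronglyMeasurable f (gauss n)) {C : ℝ}
    (hb : ∀ x, |f x| ≤ C) : Integrable f (gauss n) :=
  ⟨hm, HasFiniteIntegral.of_bounded (C := C)
    (ae_of_all _ fun x => by simpa [Real.norm_eq_abs] using hb x)⟩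

lemma gExp_const (c : ℝ) : gExp n (fun _ => c) = c := by
  simp [gExp]

lemma abs_gExp_le {f : (Fin n → ℝ) → ℝ} {C : ℝ} (hb : ∀ x, |f x| ≤ C) :
    |gExp n f| ≤ C := by
  have := norm_integral_le_of_norm_le_const (μ := gauss n) (f := f) (C := C)
    (ae_of_all _ fun x => by simpa [Real.norm_eq_abs] using hb x)
  simpa [gExp, Real.norm_eq_abs, measure_univ] using this

lemma gExp_comp (φ : (Fin n → ℝ) ≃ᵐ (Fin n → ℝ)) (hφ : MeasurePreserving φ (gauss n) (gauss n))
    (F : (Fin n → ℝ) → ℝ) : gExp n (fun x => F (φ x)) = gExp n F :=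
  hφ.integral_comp φ.measurableEmbedding F

lemma gCov_comp (φ : (Fin n → ℝ) ≃ᵐ (Fin n → ℝ)) (hφ : MeasurePreserving φ (gauss n) (gauss n))
    (f g : (Fin n → ℝ) → ℝ) :
    gCov n (fun x => f (φ x)) (fun x => g (φ x)) = gCov n f g := by
  unfold gCov
  rw [gExp_comp φ hφ f, gExp_comp φ hφ g]
  exact gExp_comp φ hφ (fun x => (f x - gExp n f) * (g x - gExp n g))

lemma gCov_const (f : (Fin n → ℝ) → ℝ) (c : ℝ) : gCov n f (fun _ => c) = 0 := by
  unfold gCov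
  rw [gExp_const c]
  simp [gExp]

lemma gCov_expand {f h : (Fin n → ℝ) → ℝ} (hf : Measurable f) (hh : Measurable h)
    {Cf Ch : ℝ} (hbf : ∀ x, |f x| ≤ Cf) (hbh : ∀ x, |h x| ≤ Ch) :
    gCov n f h = gExp n (fun x => f x * h x) - gExp n f * gExp n h := by
  have hif : Integrable f (gauss n) := integrable_bdd hf.aestronglyMeasurable hbf
  have hih : Integrable h (gauss n) := integrable_bdd hh.aestronglyMeasurable hbh
  have hifh : Integrable (fun x => f x * h x) (gauss n) := by
    refine integrable_bdd (hf.mul hh).aestronglyMeasurable (C := Cf * Ch) ?_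
    intro x
    rw [abs_mul]
    exact mul_le_mul (hbf x) (hbh x) (abs_nonneg _) ((abs_nonneg (f x)).trans (hbf x))
  unfold gCov gExp
  have h1 : (fun x => (f x - ∫ x, f x ∂gauss n) * (h x - ∫ x, h x ∂gauss n)) =
      fun x => f x * h x - ((∫ x, h x ∂gauss n) * f x +
        ((∫ x, f x ∂gauss n) * h x - (∫ x, f x ∂gauss n) * (∫ x, h x ∂gauss n))) :=
    funext fun x => by ring
  have hi1 : Integrable (fun x => (∫ x, f x ∂gauss n) * h x -
      (∫ x, f x ∂gauss n) * (∫ x, h x ∂gauss n)) (gauss n) :=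
    (hih.const_mul _).sub (integrable_const _)
  have hi2 : Integrable (fun x => (∫ x, h x ∂gauss n) * f x +
      ((∫ x, f x ∂gauss n) * h x - (∫ x, f x ∂gauss n) * (∫ x, h x ∂gauss n))) (gauss n) :=
    (hif.const_mul _).add hi1
  rw [h1, integral_sub hifh hi2, integral_add (hif.const_mul _) hi1,
    integral_sub (hih.const_mul _) (integrable_const _),
    integral_const_mul, integral_const_mul, integral_const]
  simp [measure_univ]
  ring

end Basics

section Bessel

variable {n : ℕ}

lemma gauss_cyl_one (b : ℝ) (i : Fin n) :
    gauss n {x : Fin n → ℝ | x i ≤ b} = gaussianReal 0 1 (Set.Iic b) := by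
  classical
  have hset : {x : Fin n → ℝ | x i ≤ b} =
      Set.univ.pi (fun k => if k = i then Set.Iic b else Set.univ) := by
    ext x
    simp only [Set.mem_setOf_eq, Set.mem_univ_pi]
    constructor
    · intro hx k
      by_cases hk : k = i
      · subst hk; simpa using hx
      · simp [hk]
    · intro hx
      have := hx i
      simpa using this
  rw [hset]
  show (Measure.pi fun _ => gaussianReal 0 1) _ = _
  rw [Measure.pi_pi]
  rw [Finset.prod_eq_single i (fun j _ hj => by simp [hj]) (by simp)]
  simp

lemma gauss_cyl_two (b : ℝ) {i j : Fin n} (hij : i ≠ j) :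
    gauss n ({x : Fin n → ℝ | x i ≤ b} ∩ {x : Fin n → ℝ | x j ≤ b}) =
      gaussianReal 0 1 (Set.Iic b) * gaussianReal 0 1 (Set.Iic b) := by
  classical
  have hset : {x : Fin n → ℝ | x i ≤ b} ∩ {x : Fin n → ℝ | x j ≤ b} =
      Set.univ.pi (fun k =>
        if k = i then Set.Iic b else if k = j then Set.Iic b else Set.univ) := by
    ext x
    simp only [Set.mem_inter_iff, Set.mem_setOf_eq, Set.mem_univ_pi]
    constructor
    · rintro ⟨h1, h2⟩ k
      by_cases hk : k = i
      · subst hk; simp [h1]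
      · by_cases hk2 : k = j
        · subst hk2; simp [hk, h2]
        · simp [hk, hk2]
    · intro hx
      refine ⟨?_, ?_⟩
      · have := hx i; simpa using this
      · have := hx j; simpa [(Ne.symm hij : j ≠ i)] using this
  rw [hset]
  show (Measure.pi fun _ => gaussianReal 0 1) _ = _
  rw [Measure.pi_pi]
  have hout : ∀ k ∈ Finset.univ, k ∉ ({i, j} : Finset (Fin n)) →
      gaussianReal 0 1 (if k = i then Set.Iic b else if k = j then Set.Iic b else Set.univ)
        = 1 := by
    intro k _ hk
    simp only [Finset.mem_insert, Finset.mem_singleton] at hk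
    push_neg at hk
    simp [hk.1, hk.2]
  rw [← Finset.prod_subset (Finset.subset_univ ({i, j} : Finset (Fin n))) hout,
    Finset.prod_pair hij]
  simp [(Ne.symm hij : j ≠ i)]

end Bessel

lemma bessel {n : ℕ} (f : (Fin n → ℝ) → ℝ) (hmf : Measurable f)
    (h0 : ∀ x, 0 ≤ f x) (h1 : ∀ x, f x ≤ 1) (b : ℝ) :
    ∑ i, (gCov n f (Set.indicator {x : Fin n → ℝ | x i ≤ b} 1)) ^ 2 ≤ 1 := by
  classical
  set m : ℝ := (gaussianReal 0 1 (Set.Iic b)).toReal with hm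
  set χ : Fin n → (Fin n → ℝ) → ℝ :=
    fun i => Set.indicator {x : Fin n → ℝ | x i ≤ b} 1 with hχdef
  have hSmeas : ∀ i : Fin n, MeasurableSet {x : Fin n → ℝ | x i ≤ b} :=
    fun i => measurableSet_le (measurable_pi_apply i) measurable_const
  have hχmeas : ∀ i, Measurable (χ i) := fun i => measurable_one.indicator (hSmeas i)
  have hχ0 : ∀ i x, 0 ≤ χ i x := fun i x => Set.indicator_nonneg (fun _ _ => zero_le_one) x
  have hχ1 : ∀ i x, χ i x ≤ 1 := by
    intro i x
    by_cases hx : x ∈ {x : Fin n → ℝ | x i ≤ b}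
    · rw [hχdef]; simp only [Set.indicator_of_mem hx]; exact le_refl _
    · rw [hχdef]; simp only [Set.indicator_of_notMem hx]; norm_num
  have hm0 : 0 ≤ m := ENNReal.toReal_nonneg
  have hm1 : m ≤ 1 := by
    rw [hm]
    have h := prob_le_one (μ := gaussianReal 0 1) (s := Set.Iic b)
    calc (gaussianReal 0 1 (Set.Iic b)).toReal ≤ (1 : ENNReal).toReal :=
          ENNReal.toReal_mono (by simp) h
      _ = 1 := by simp
  have hEχ : ∀ i, ∫ x, χ i x ∂gauss n = m := by
    intro i
    rw [hχdef]
    show ∫ x, Set.indicator {x : Fin n → ℝ | x i ≤ b} 1 x ∂gauss n = m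
    rw [integral_indicator_one (hSmeas i), measureReal_def, gauss_cyl_one b i]
  have hEχχ : ∀ i j, i ≠ j → ∫ x, χ i x * χ j x ∂gauss n = m * m := by
    intro i j hij
    have hfun : (fun x => χ i x * χ j x) =
        Set.indicator ({x : Fin n → ℝ | x i ≤ b} ∩ {x : Fin n → ℝ | x j ≤ b}) 1 := by
      funext x
      rw [Set.inter_indicator_one]
      rfl
    rw [hfun, integral_indicator_one ((hSmeas i).inter (hSmeas j)), measureReal_def, gauss_cyl_two b hij,
      ENNReal.toReal_mul]
  have hEχχs : ∀ i, ∫ x, χ i x * χ i x ∂gauss n = m := by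
    intro i
    have hfun : (fun x => χ i x * χ i x) = χ i := by
      funext x
      by_cases hx : x ∈ {x : Fin n → ℝ | x i ≤ b} <;>
        simp [hχdef, Set.indicator_of_mem, Set.indicator_of_notMem, hx]
    rw [hfun]
    exact hEχ i
  set Ef : ℝ := gExp n f with hEfdef
  have hEf0 : 0 ≤ Ef := integral_nonneg h0
  have hEf1 : Ef ≤ 1 := by
    have habs := abs_gExp_le (n := n) (f := f) (C := 1)
      (fun x => abs_le.mpr ⟨by linarith [h0 x], h1 x⟩)
    exact (abs_le.mp habs).2
  set F : (Fin n → ℝ) → ℝ := fun x => f x - Ef with hFdef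
  set G : Fin n → (Fin n → ℝ) → ℝ := fun i x => χ i x - m with hGdef
  have hFb : ∀ x, |F x| ≤ 1 := fun x =>
    abs_le.mpr ⟨by simp only [hFdef]; linarith [h0 x], by simp only [hFdef]; linarith [h1 x]⟩
  have hGb : ∀ i x, |G i x| ≤ 1 := fun i x =>
    abs_le.mpr ⟨by simp only [hGdef]; linarith [hχ0 i x],
      by simp only [hGdef]; linarith [hχ1 i x]⟩
  have hFmeas : Measurable F := hmf.sub measurable_const
  have hGmeas : ∀ i, Measurable (G i) := fun i => (hχmeas i).sub measurable_const
  have hInt : ∀ (u w : (Fin n → ℝ) → ℝ), Measurable u → Measurable w →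
      (∀ x, |u x| ≤ 1) → (∀ x, |w x| ≤ 1) →
      Integrable (fun x => u x * w x) (gauss n) := by
    intro u w hu hw hub hwb
    refine integrable_bdd (hu.mul hw).aestronglyMeasurable (C := 1) ?_
    intro x
    rw [abs_mul]
    exact mul_le_one₀ (hub x) (abs_nonneg _) (hwb x)
  set c : Fin n → ℝ := fun i => gCov n f (χ i) with hcdef
  have hcFG : ∀ i, c i = ∫ x, F x * G i x ∂gauss n := by
    intro i
    rw [hcdef]
    show gCov n f (χ i) = _
    unfold gCov gExp
    rw [hEχ i]
    refine integral_congr_ae (Filter.Eventually.of_forall fun x => ?_)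
    simp only [hFdef, hGdef, hEfdef, gExp]
  have hGG : ∀ i j, ∫ x, G i x * G j x ∂gauss n = if i = j then m - m ^ 2 else 0 := by
    intro i j
    have hexp : (fun x => G i x * G j x) =
        fun x => χ i x * χ j x - (m * χ i x + (m * χ j x - m * m)) := by
      funext x
      simp only [hGdef]
      ring
    have hiχ : ∀ k, Integrable (χ k) (gauss n) := fun k =>
      integrable_bdd (hχmeas k).aestronglyMeasurable (C := 1)
        (fun x => abs_le.mpr ⟨by linarith [hχ0 k x], hχ1 k x⟩)
    have hiχχ : Integrable (fun x => χ i x * χ j x) (gauss n) :=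
      hInt _ _ (hχmeas i) (hχmeas j)
        (fun x => abs_le.mpr ⟨by linarith [hχ0 i x], hχ1 i x⟩)
        (fun x => abs_le.mpr ⟨by linarith [hχ0 j x], hχ1 j x⟩)
    have hr1 : Integrable (fun x => m * χ j x - m * m) (gauss n) :=
      ((hiχ j).const_mul m).sub (integrable_const _)
    have hr2 : Integrable (fun x => m * χ i x + (m * χ j x - m * m)) (gauss n) :=
      ((hiχ i).const_mul m).add hr1
    rw [hexp]
    rw [integral_sub hiχχ hr2, integral_add ((hiχ i).const_mul m) hr1,
      integral_sub ((hiχ j).const_mul m) (integrable_const _),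
      integral_const_mul, integral_const_mul, integral_const]
    simp only [probReal_univ, ENNReal.toReal_one, one_smul]
    by_cases hij : i = j
    · subst hij
      rw [hEχχs i, hEχ i, if_pos rfl]
      ring
    · rw [hEχχ i j hij, hEχ i, hEχ j, if_neg hij]
      ring
  set v : ℝ := m - m ^ 2 with hv
  have hv0 : 0 ≤ v := by nlinarith
  have hv14 : v ≤ 1 / 4 := by nlinarith [sq_nonneg (m - 1 / 2)]
  set T : (Fin n → ℝ) → ℝ := fun x => ∑ i, c i * G i x with hTdef
  have hcb : ∀ i, |c i| ≤ 1 := by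
    intro i
    rw [hcFG i]
    have := norm_integral_le_of_norm_le_const (μ := gauss n)
      (f := fun x => F x * G i x) (C := 1)
      (ae_of_all _ fun x => by
        rw [Real.norm_eq_abs, abs_mul]
        exact mul_le_one₀ (hFb x) (abs_nonneg _) (hGb i x))
    simpa [Real.norm_eq_abs, measure_univ] using this
  have hTmeas : Measurable T :=
    Finset.measurable_sum _ fun i _ => (hGmeas i).const_mul (c i)
  have hTb : ∀ x, |T x| ≤ (n : ℝ) := by
    intro x
    calc |∑ i, c i * G i x| ≤ ∑ i, |c i * G i x| := Finset.abs_sum_le_sum_abs _ _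
      _ ≤ ∑ _i : Fin n, 1 := Finset.sum_le_sum fun i _ => by
          rw [abs_mul]
          exact mul_le_one₀ (hcb i) (abs_nonneg _) (hGb i x)
      _ = n := by simp
  have hIFT : ∫ x, F x * T x ∂gauss n = ∑ i, c i ^ 2 := by
    have hfun : (fun x => F x * T x) = fun x => ∑ i, c i * (F x * G i x) := by
      funext x
      simp only [hTdef, Finset.mul_sum]
      exact Finset.sum_congr rfl fun i _ => by ring
    rw [hfun]
    rw [integral_finset_sum _ (fun i _ =>
      (hInt F (G i) hFmeas (hGmeas i) hFb (hGb i)).const_mul (c i))]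
    refine Finset.sum_congr rfl fun i _ => ?_
    rw [integral_const_mul, ← hcFG i]
    ring
  have hITT : ∫ x, T x * T x ∂gauss n = v * ∑ i, c i ^ 2 := by
    have hfun : (fun x => T x * T x) = fun x => ∑ i, ∑ j, c i * c j * (G i x * G j x) := by
      funext x
      simp only [hTdef, Finset.sum_mul_sum]
      exact Finset.sum_congr rfl fun i _ => Finset.sum_congr rfl fun j _ => by ring
    have hinner : ∀ i : Fin n, ∑ j, ∫ x, c i * c j * (G i x * G j x) ∂gauss n
        = c i ^ 2 * v := by
      intro i
      have hterm : ∀ j : Fin n, ∫ x, c i * c j * (G i x * G j x) ∂gauss n =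
          if i = j then c i * c j * v else 0 := by
        intro j
        rw [integral_const_mul, hGG i j]
        by_cases hij : i = j
        · rw [if_pos hij, if_pos hij]
        · rw [if_neg hij, if_neg hij, mul_zero]
      rw [Finset.sum_congr rfl fun j _ => hterm j]
      rw [Finset.sum_ite_eq Finset.univ i (fun j => c i * c j * v)]
      rw [if_pos (Finset.mem_univ i)]
      ring
    rw [hfun]
    rw [integral_finset_sum _ (fun i _ => integrable_finset_sum _ (fun j _ =>
      (hInt (G i) (G j) (hGmeas i) (hGmeas j) (hGb i) (hGb j)).const_mul (c i * c j)))]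
    have hstep : ∀ i : Fin n, ∫ x, ∑ j, c i * c j * (G i x * G j x) ∂gauss n
        = c i ^ 2 * v := by
      intro i
      rw [integral_finset_sum _ (fun j _ =>
        (hInt (G i) (G j) (hGmeas i) (hGmeas j) (hGb i) (hGb j)).const_mul (c i * c j))]
      exact hinner i
    rw [Finset.sum_congr rfl fun i _ => hstep i, Finset.mul_sum]
    exact Finset.sum_congr rfl fun i _ => by ring
  have hIF2le : ∫ x, F x * F x ∂gauss n ≤ 1 := by
    have hle : ∀ x, F x * F x ≤ 1 := by
      intro x
      have := abs_le.mp (hFb x)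
      nlinarith [this.1, this.2]
    calc ∫ x, F x * F x ∂gauss n ≤ ∫ _x, (1 : ℝ) ∂gauss n :=
          integral_mono (hInt F F hFmeas hFmeas hFb hFb) (integrable_const 1) hle
      _ = 1 := by simp [measure_univ]
  have hIF2nonneg : 0 ≤ ∫ x, F x * F x ∂gauss n := integral_nonneg fun x => mul_self_nonneg _
  have hS0 : (0:ℝ) ≤ ∑ i, c i ^ 2 := Finset.sum_nonneg fun i _ => sq_nonneg _
  have hkey : 0 ≤ (1 + v) ^ 2 * (∫ x, F x * F x ∂gauss n) - 2 * (1 + v) * (∑ i, c i ^ 2)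
      + v * (∑ i, c i ^ 2) := by
    have hQ : (0:ℝ) ≤ ∫ x, ((1 + v) * F x - T x) ^ 2 ∂gauss n :=
      integral_nonneg fun x => sq_nonneg _
    have hexp : (fun x => ((1 + v) * F x - T x) ^ 2) =
        fun x => (1 + v) ^ 2 * (F x * F x) - 2 * (1 + v) * (F x * T x) + T x * T x :=
      funext fun x => by ring
    rw [show (∫ x, ((1 + v) * F x - T x) ^ 2 ∂gauss n) =
        ∫ x, (1 + v) ^ 2 * (F x * F x) - 2 * (1 + v) * (F x * T x) + T x * T x ∂gauss n from by
      rw [← hexp]] at hQ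
    have hiFF := (hInt F F hFmeas hFmeas hFb hFb).const_mul ((1 + v) ^ 2)
    have hiFT : Integrable (fun x => F x * T x) (gauss n) := by
      refine integrable_bdd (hFmeas.mul hTmeas).aestronglyMeasurable (C := (n : ℝ)) ?_
      intro x
      rw [abs_mul]
      calc |F x| * |T x| ≤ 1 * (n : ℝ) :=
            mul_le_mul (hFb x) (hTb x) (abs_nonneg _) zero_le_one
        _ = n := one_mul _
    have hiTT : Integrable (fun x => T x * T x) (gauss n) := by
      refine integrable_bdd (hTmeas.mul hTmeas).aestronglyMeasurable (C := (n : ℝ) * n) ?_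
      intro x
      rw [abs_mul]
      exact mul_le_mul (hTb x) (hTb x) (abs_nonneg _) (Nat.cast_nonneg n)
    have hiFT2 : Integrable (fun x => 2 * (1 + v) * (F x * T x)) (gauss n) :=
      hiFT.const_mul _
    have hi1 : Integrable
        (fun x => (1 + v) ^ 2 * (F x * F x) - 2 * (1 + v) * (F x * T x)) (gauss n) :=
      hiFF.sub hiFT2
    rw [integral_add hi1 hiTT, integral_sub hiFF hiFT2,
      integral_const_mul, integral_const_mul, hIFT, hITT] at hQ
    linarith
  have hfinal : (∑ i, c i ^ 2) ≤ 1 := by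
    nlinarith [hkey, hIF2le, hIF2nonneg, hS0, hv0, hv14,
      mul_le_mul_of_nonneg_left hIF2le (sq_nonneg (1 + v))]
  exact hfinal

section Meas

variable {n : ℕ}

lemma shift_measurable (g : (Fin n → ℝ) → ℝ) (hg : Measurable g) (t : ℝ) (y : Fin n → ℝ) :
    Measurable (shift n g t y) :=
  hg.comp (measurable_pi_lambda _ fun i =>
    ((measurable_pi_apply i).const_mul _).add_const _)

lemma cov_shift_measurable (t : ℝ) {g χ : (Fin n → ℝ) → ℝ} (hg : Measurable g)
    (hχ : Measurable χ) (hgb : ∀ x, |g x| ≤ 1) (hχb : ∀ x, |χ x| ≤ 1) :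
    Measurable (fun y => gCov n (shift n g t y) χ) := by
  have hkey : (fun y => gCov n (shift n g t y) χ) = fun y =>
      (∫ x, shift n g t y x * χ x ∂gauss n) -
      (∫ x, shift n g t y x ∂gauss n) * gExp n χ := by
    funext y
    rw [gCov_expand (shift_measurable g hg t y) hχ (Cf := 1) (Ch := 1)
      (fun x => hgb _) hχb]
    rfl
  rw [hkey]
  have hσρ : Measurable (fun p : (Fin n → ℝ) × (Fin n → ℝ) =>
      (fun i => Real.sqrt (1 - Real.exp (-2*t)) * p.2 i + Real.exp (-t) * p.1 i : Fin n → ℝ)) :=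
    measurable_pi_lambda _ fun i =>
      (((measurable_pi_apply i).comp measurable_snd).const_mul _).add
        (((measurable_pi_apply i).comp measurable_fst).const_mul _)
  have h1 : Measurable fun y => ∫ x, shift n g t y x * χ x ∂gauss n := by
    have hj : StronglyMeasurable (fun p : (Fin n → ℝ) × (Fin n → ℝ) =>
        shift n g t p.1 p.2 * χ p.2) :=
      ((hg.comp hσρ).mul (hχ.comp measurable_snd)).stronglyMeasurable
    exact hj.integral_prod_right'.measurable
  have h2 : Measurable fun y => ∫ x, shift n g t y x ∂gauss n := by
    have hj : StronglyMeasurable (fun p : (Fin n → ℝ) × (Fin n → ℝ) =>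
        shift n g t p.1 p.2) := (hg.comp hσρ).stronglyMeasurable
    exact hj.integral_prod_right'.measurable
  exact h1.sub (h2.mul_const _)

lemma cov_shift_bound (t : ℝ) {g χ : (Fin n → ℝ) → ℝ} (hgb : ∀ x, |g x| ≤ 1)
    (hχb : ∀ x, |χ x| ≤ 1) (y : Fin n → ℝ) : |gCov n (shift n g t y) χ| ≤ 4 := by
  have hfb : ∀ x, |shift n g t y x| ≤ 1 := fun x => hgb _
  have hEf := abs_gExp_le (n := n) hfb
  have hEχ := abs_gExp_le (n := n) hχb
  have h4 : (4:ℝ) = 2 * 2 := by norm_num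
  rw [h4]
  refine abs_gExp_le ?_
  intro x
  rw [abs_mul]
  have h1 : |shift n g t y x - gExp n (shift n g t y)| ≤ 2 := by
    calc |shift n g t y x - gExp n (shift n g t y)|
        ≤ |shift n g t y x| + |gExp n (shift n g t y)| := abs_sub _ _
      _ ≤ 1 + 1 := add_le_add (hfb x) hEf
      _ = 2 := by norm_num
  have h2 : |χ x - gExp n χ| ≤ 2 := by
    calc |χ x - gExp n χ| ≤ |χ x| + |gExp n χ| := abs_sub _ _
      _ ≤ 1 + 1 := add_le_add (hχb x) hEχ
      _ = 2 := by norm_num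
  exact mul_le_mul h1 h2 (abs_nonneg _) (by norm_num)

end Meas


theorem stmt3 (n : ℕ) (t : ℝ) (ht : 0 < t) (A : Set (Fin n → ℝ))
    (hA : IsHalfspace A) :
    gExp n (fun y =>
      (gCov n (shift n (Set.indicator {x : Fin n → ℝ | ∑ i, (x i) ^ 2 ≤ (n : ℝ)} 1) t y)
        (Set.indicator A 1)) ^ 2) ≤ 1 / n := by
  classical
  obtain ⟨a, b, rfl⟩ := hA
  set Ball : Set (Fin n → ℝ) := {x | ∑ i, (x i) ^ 2 ≤ (n : ℝ)} with hBall
  set g : (Fin n → ℝ) → ℝ := Set.indicator Ball 1 with hgdef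
  have hBallMeas : MeasurableSet Ball :=
    measurableSet_le (Finset.measurable_sum _ fun i _ =>
      (measurable_pi_apply i).pow_const 2) measurable_const
  have hgmeas : Measurable g := measurable_one.indicator hBallMeas
  have hg0 : ∀ x, 0 ≤ g x := fun x => Set.indicator_nonneg (fun _ _ => zero_le_one) x
  have hg1 : ∀ x, g x ≤ 1 := by
    intro x
    by_cases hx : x ∈ Ball
    · rw [hgdef]; simp only [Set.indicator_of_mem hx]; exact le_refl _
    · rw [hgdef]; simp only [Set.indicator_of_notMem hx]; norm_num
  have hgb : ∀ x, |g x| ≤ 1 := fun x => abs_le.mpr ⟨by linarith [hg0 x], hg1 x⟩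
  by_cases ha : a = 0
  · subst ha
    have hconst : ∃ cc : ℝ,
        Set.indicator {x : Fin n → ℝ | ∑ i, x i * (0 : Fin n → ℝ) i ≤ b} 1 =
          fun _ : Fin n → ℝ => cc := by
      by_cases hb : (0:ℝ) ≤ b
      · refine ⟨1, ?_⟩
        have huniv : {x : Fin n → ℝ | ∑ i, x i * (0 : Fin n → ℝ) i ≤ b} = Set.univ := by
          ext x; simp [hb]
        rw [huniv, Set.indicator_univ]; rfl
      · refine ⟨0, ?_⟩
        have hemp : {x : Fin n → ℝ | ∑ i, x i * (0 : Fin n → ℝ) i ≤ b} = ∅ := by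
          ext x; simp [hb]
        rw [hemp, Set.indicator_empty]
    obtain ⟨cc, hcc⟩ := hconst
    rw [hcc]
    have hzero : (fun y => (gCov n (shift n g t y) (fun _ => cc)) ^ 2) =
        fun _ : Fin n → ℝ => (0:ℝ) := by
      funext y
      rw [gCov_const]
      norm_num
    rw [hzero, gExp_const]
    positivity
  · obtain ⟨r, hr, hphi⟩ := exists_phi a ha
    have hnpos : 0 < n := by
      rcases Function.ne_iff.mp ha with ⟨i, _⟩
      exact i.pos
    set b' : ℝ := b / r with hb'
    set χ' : Fin n → (Fin n → ℝ) → ℝ :=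
      fun i => Set.indicator {x : Fin n → ℝ | x i ≤ b'} 1 with hχ'def
    have hχ'meas : ∀ i, Measurable (χ' i) := fun i =>
      measurable_one.indicator (measurableSet_le (measurable_pi_apply i) measurable_const)
    have hχ'0 : ∀ i x, 0 ≤ χ' i x := fun i x =>
      Set.indicator_nonneg (fun _ _ => zero_le_one) x
    have hχ'1 : ∀ i x, χ' i x ≤ 1 := by
      intro i x
      by_cases hx : x ∈ {x : Fin n → ℝ | x i ≤ b'}
      · rw [hχ'def]; simp only [Set.indicator_of_mem hx]; exact le_refl _
      · rw [hχ'def]; simp only [Set.indicator_of_notMem hx]; norm_num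
    have hχ'b : ∀ i x, |χ' i x| ≤ 1 := fun i x =>
      abs_le.mpr ⟨by linarith [hχ'0 i x], hχ'1 i x⟩
    have hAb : ∀ x, |Set.indicator {x : Fin n → ℝ | ∑ i, x i * a i ≤ b} (1:(Fin n → ℝ) → ℝ) x| ≤ 1 := by
      intro x
      by_cases hx : x ∈ {x : Fin n → ℝ | ∑ i, x i * a i ≤ b}
      · rw [Set.indicator_of_mem hx]; norm_num
      · rw [Set.indicator_of_notMem hx]; norm_num
    have hcopy : ∀ i : Fin n,
        gExp n (fun y => (gCov n (shift n g t y)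
          (Set.indicator {x : Fin n → ℝ | ∑ i, x i * a i ≤ b} 1)) ^ 2)
        = gExp n (fun y => (gCov n (shift n g t y) (χ' i)) ^ 2) := by
      intro i
      obtain ⟨φ, hMP, hlin, hsq, hip⟩ := hphi i
      have hcomp := gExp_comp φ hMP (fun y => (gCov n (shift n g t y)
        (Set.indicator {x : Fin n → ℝ | ∑ i, x i * a i ≤ b} 1)) ^ 2)
      rw [← hcomp]
      refine congrArg (gExp n) (funext fun y => ?_)
      congr 1
      calc gCov n (shift n g t (φ y))
            (Set.indicator {x : Fin n → ℝ | ∑ i, x i * a i ≤ b} 1)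
          = gCov n (fun x => shift n g t (φ y) (φ x))
            (fun x => Set.indicator {x : Fin n → ℝ | ∑ i, x i * a i ≤ b} 1 (φ x)) :=
            (gCov_comp φ hMP _ _).symm
        _ = gCov n (shift n g t y) (χ' i) := by
            congr 1
            · funext x
              show g (fun k => Real.sqrt (1 - Real.exp (-2*t)) * φ x k
                  + Real.exp (-t) * φ y k) = g (fun k =>
                  Real.sqrt (1 - Real.exp (-2*t)) * x k + Real.exp (-t) * y k)
              have h1 : (fun k => Real.sqrt (1 - Real.exp (-2*t)) * φ x k
                  + Real.exp (-t) * φ y k) = φ (fun k =>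
                  Real.sqrt (1 - Real.exp (-2*t)) * x k + Real.exp (-t) * y k) :=
                funext fun k => (hlin _ _ x y k).symm
              rw [h1]
              set z : Fin n → ℝ := fun k =>
                Real.sqrt (1 - Real.exp (-2*t)) * x k + Real.exp (-t) * y k with hz
              have hzsum := hsq z
              by_cases hzB : z ∈ Ball
              · have hφz : φ z ∈ Ball := by
                  simp only [hBall, Set.mem_setOf_eq] at hzB ⊢
                  rw [hzsum]; exact hzB
                rw [hgdef, Set.indicator_of_mem hφz, Set.indicator_of_mem hzB]
                rfl
              · have hφz : φ z ∉ Ball := by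
                  simp only [hBall, Set.mem_setOf_eq] at hzB ⊢
                  rw [hzsum]; exact hzB
                rw [hgdef, Set.indicator_of_notMem hφz, Set.indicator_of_notMem hzB]
            · funext x
              have hmem : (φ x ∈ {x : Fin n → ℝ | ∑ i, x i * a i ≤ b})
                  ↔ (x ∈ {x : Fin n → ℝ | x i ≤ b'}) := by
                simp only [Set.mem_setOf_eq]
                rw [hip x, hb', mul_comm]
                exact (le_div_iff₀ hr).symm
              by_cases hx : x ∈ {x : Fin n → ℝ | x i ≤ b'}
              · rw [Set.indicator_of_mem (hmem.mpr hx)]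
                simp only [hχ'def]
                rw [Set.indicator_of_mem hx]
                rfl
              · rw [Set.indicator_of_notMem (fun hc => hx (hmem.mp hc))]
                simp only [hχ'def]
                rw [Set.indicator_of_notMem hx]
    have hint : ∀ i : Fin n,
        Integrable (fun y => (gCov n (shift n g t y) (χ' i)) ^ 2) (gauss n) := by
      intro i
      have hmeas := cov_shift_measurable t hgmeas (hχ'meas i) hgb (hχ'b i)
      refine integrable_bdd ((hmeas.pow_const 2).aestronglyMeasurable) (C := 16) ?_
      intro y
      have hb4 := cov_shift_bound t hgb (hχ'b i) y
      rw [abs_of_nonneg (sq_nonneg _)]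
      rcases abs_le.mp hb4 with ⟨hl, hu⟩
      nlinarith
    have hsum : (n : ℝ) * gExp n (fun y => (gCov n (shift n g t y)
        (Set.indicator {x : Fin n → ℝ | ∑ i, x i * a i ≤ b} 1)) ^ 2)
        = ∑ i : Fin n, gExp n (fun y => (gCov n (shift n g t y) (χ' i)) ^ 2) := by
      rw [Finset.sum_congr rfl fun i _ => (hcopy i).symm]
      rw [Finset.sum_const, Finset.card_univ, Fintype.card_fin, nsmul_eq_mul]
    have hsum2 : ∑ i : Fin n, gExp n (fun y => (gCov n (shift n g t y) (χ' i)) ^ 2)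
        = gExp n (fun y => ∑ i, (gCov n (shift n g t y) (χ' i)) ^ 2) :=
      (integral_finset_sum Finset.univ (fun i _ => hint i)).symm
    have hle1 : gExp n (fun y => ∑ i, (gCov n (shift n g t y) (χ' i)) ^ 2) ≤ 1 := by
      have hbes : ∀ y, ∑ i, (gCov n (shift n g t y) (χ' i)) ^ 2 ≤ 1 := by
        intro y
        exact bessel (shift n g t y) (shift_measurable g hgmeas t y)
          (fun x => hg0 _) (fun x => hg1 _) b'
      have hmono := integral_mono_of_nonneg (μ := gauss n)
        (f := fun y => ∑ i, (gCov n (shift n g t y) (χ' i)) ^ 2) (g := fun _ => (1:ℝ))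
        (ae_of_all _ fun y => Finset.sum_nonneg fun i _ => sq_nonneg _)
        (integrable_const 1)
        (ae_of_all _ hbes)
      calc gExp n (fun y => ∑ i, (gCov n (shift n g t y) (χ' i)) ^ 2)
          ≤ ∫ _y, (1:ℝ) ∂gauss n := hmono
        _ = 1 := by simp
    have hnR : (0:ℝ) < n := by exact_mod_cast hnpos
    rw [le_div_iff₀ hnR]
    have := hsum.symm ▸ (hsum2 ▸ hle1)
    nlinarith [hsum, hsum2, hle1]
end

section
/- Let f : ℝ^n → [0,1] be measurable, let t > 0 and δ ∈ ℝ, and suppose there exists a half-space A ⊆ ℝ^n with Cov(P_t f, 1_A) ≥ δ. Then there exists a half-space A' ⊆ ℝ^n with Cov(f, 1_{A'}) ≥ δ. -/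
open MeasureTheory Real

open ProbabilityTheory
open scoped ENNReal NNReal

/-- lintegral of a product of single-coordinate functions over a finite product measure. -/
theorem lintegral_fin_pi_prod {n : ℕ} {α : Type*} [MeasurableSpace α] (μ : Measure α)
    [SigmaFinite μ] (g : Fin n → α → ℝ≥0∞) (hg : ∀ i, Measurable (g i)) :
    ∫⁻ z : Fin n → α, ∏ i, g i (z i) ∂(Measure.pi fun _ => μ) = ∏ i, ∫⁻ x, g i x ∂μ := by
  induction n with
  | zero => simp [Measure.pi_of_empty (fun _ : Fin 0 => μ)]
  | succ n ih =>
    have hmp := (measurePreserving_piFinSuccAbove (fun _ : Fin (n + 1) => μ) 0).symm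
    have hF : Measurable fun z : Fin (n+1) → α => ∏ i, g i (z i) :=
      Finset.measurable_prod _ fun i _ => (hg i).comp (measurable_pi_apply i)
    rw [← hmp.lintegral_comp hF]
    simp_rw [MeasurableEquiv.piFinSuccAbove_symm_apply, Fin.insertNthEquiv,
      Equiv.coe_fn_mk, Fin.insertNth_zero, cast_eq]
    have : ∀ p : α × (Fin n → α), (∏ i, g i ((Fin.cons p.1 p.2 : Fin (n+1) → α) i))
        = g 0 p.1 * ∏ i : Fin n, g i.succ (p.2 i) := by
      intro p
      rw [Fin.prod_univ_succ]
      simp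
    simp_rw [this]
    rw [lintegral_prod_mul (f := fun x => g 0 x) (g := fun w : Fin n → α => ∏ i, g i.succ (w i)) (hg 0).aemeasurable
      (Finset.measurable_prod _ fun i _ => (hg i.succ).comp (measurable_pi_apply i)).aemeasurable,
      ih (fun i => g i.succ) (fun i => hg i.succ), Fin.prod_univ_succ]

theorem lintegral_pi_prod_s5 {ι : Type*} [Fintype ι] {α : Type*} [MeasurableSpace α]
    (μ : Measure α) [SigmaFinite μ] (g : ι → α → ℝ≥0∞) (hg : ∀ i, Measurable (g i)) :
    ∫⁻ z : ι → α, ∏ i, g i (z i) ∂(Measure.pi fun _ => μ) = ∏ i, ∫⁻ x, g i x ∂μ := by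
  classical
  let e := (Fintype.equivFin ι).symm
  have hmp := measurePreserving_piCongrLeft (fun _ : ι => μ) e
  have hF : Measurable fun z : ι → α => ∏ i, g i (z i) :=
    Finset.measurable_prod _ fun i _ => (hg i).comp (measurable_pi_apply i)
  rw [← hmp.lintegral_comp hF]
  have h1 : ∀ w : Fin (Fintype.card ι) → α,
      (∏ i, g i ((MeasurableEquiv.piCongrLeft (fun _ => α) e) w i))
        = ∏ i', g (e i') (w i') := by
    intro w
    rw [← e.prod_comp]
    exact Finset.prod_congr rfl fun i' _ => by
      rw [MeasurableEquiv.coe_piCongrLeft, Equiv.piCongrLeft_apply_apply]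
  simp_rw [h1]
  rw [lintegral_fin_pi_prod μ _ (fun i' => hg (e i')), ← e.prod_comp]

theorem pi_gauss_withDensity (ι : Type*) [Fintype ι] :
    (Measure.pi fun _ : ι => gaussianReal 0 1)
      = (Measure.pi fun _ : ι => (volume : Measure ℝ)).withDensity
          (fun z => ∏ i, gaussianPDF 0 1 (z i)) := by
  classical
  refine Measure.pi_eq fun s hs => ?_
  rw [withDensity_apply _ (MeasurableSet.univ_pi hs), ← lintegral_indicator (MeasurableSet.univ_pi hs)]
  have h1 : (Set.univ.pi s).indicator (fun z : ι → ℝ => ∏ i, gaussianPDF 0 1 (z i))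
      = fun z => ∏ i, (s i).indicator (gaussianPDF 0 1) (z i) := by
    funext z
    by_cases hz : z ∈ Set.univ.pi s
    · rw [Set.indicator_of_mem hz]
      exact Finset.prod_congr rfl fun i _ =>
        (Set.indicator_of_mem (hz i (Set.mem_univ i)) _).symm
    · rw [Set.indicator_of_notMem hz]
      obtain ⟨i, hi⟩ : ∃ i, z i ∉ s i := by
        by_contra hc
        push_neg at hc
        exact hz fun i _ => hc i
      exact (Finset.prod_eq_zero (Finset.mem_univ i)
        (Set.indicator_of_notMem hi _)).symm
  rw [h1, lintegral_pi_prod_s5 _ _ (fun i => (measurable_gaussianPDF 0 1).indicator (hs i))]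
  exact Finset.prod_congr rfl fun i _ => by
    rw [lintegral_indicator (hs i),
      ← gaussianReal_apply 0 (by norm_num : (1 : NNReal) ≠ 0) (s i)]

noncomputable def rotL (n : ℕ) (c s : ℝ) :
    ((Fin n ⊕ Fin n) → ℝ) →ₗ[ℝ] ((Fin n ⊕ Fin n) → ℝ) where
  toFun z := fun j => Sum.rec (fun i => c * z (Sum.inl i) + s * z (Sum.inr i))
    (fun i => s * z (Sum.inl i) - c * z (Sum.inr i)) j
  map_add' x y := by funext j; cases j <;> simp <;> ring
  map_smul' r x := by funext j; cases j <;> simp [smul_eq_mul] <;> ring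

theorem rotL_invol {n : ℕ} {c s : ℝ} (hcs : c ^ 2 + s ^ 2 = 1) :
    (rotL n c s) ∘ₗ (rotL n c s) = LinearMap.id := by
  refine LinearMap.ext fun z => funext fun j => ?_
  cases j with
  | inl i => simp only [LinearMap.comp_apply, LinearMap.id_apply, rotL, LinearMap.coe_mk,
      AddHom.coe_mk]; linear_combination (z (Sum.inl i)) * hcs
  | inr i => simp only [LinearMap.comp_apply, LinearMap.id_apply, rotL, LinearMap.coe_mk,
      AddHom.coe_mk]; linear_combination (z (Sum.inr i)) * hcs

theorem rotL_measurable (n : ℕ) (c s : ℝ) : Measurable (rotL n c s) := by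
  apply measurable_pi_lambda
  intro j
  cases j with
  | inl i =>
    have h : (fun z : (Fin n ⊕ Fin n) → ℝ => (rotL n c s) z (Sum.inl i))
        = fun z => c * z (Sum.inl i) + s * z (Sum.inr i) := rfl
    rw [h]
    exact (measurable_const.mul (measurable_pi_apply _)).add
      (measurable_const.mul (measurable_pi_apply _))
  | inr i =>
    have h : (fun z : (Fin n ⊕ Fin n) → ℝ => (rotL n c s) z (Sum.inr i))
        = fun z => s * z (Sum.inl i) - c * z (Sum.inr i) := rfl
    rw [h]
    exact (measurable_const.mul (measurable_pi_apply _)).sub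
      (measurable_const.mul (measurable_pi_apply _))

theorem gaussianPDF_rot {c s : ℝ} (hcs : c ^ 2 + s ^ 2 = 1) (a b : ℝ) :
    gaussianPDF 0 1 (c * a + s * b) * gaussianPDF 0 1 (s * a - c * b)
      = gaussianPDF 0 1 a * gaussianPDF 0 1 b := by
  simp only [gaussianPDF]
  rw [← ENNReal.ofReal_mul (gaussianPDFReal_nonneg _ _ _),
    ← ENNReal.ofReal_mul (gaussianPDFReal_nonneg _ _ _)]
  congr 1
  simp only [gaussianPDFReal, NNReal.coe_one, mul_one, sub_zero]
  rw [mul_mul_mul_comm, ← Real.exp_add, mul_mul_mul_comm, ← Real.exp_add]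
  congr 1
  rw [Real.exp_eq_exp]
  linear_combination (-(a ^ 2 + b ^ 2) / 2) * hcs

theorem density_rot {n : ℕ} {c s : ℝ} (hcs : c ^ 2 + s ^ 2 = 1)
    (z : (Fin n ⊕ Fin n) → ℝ) :
    ∏ j, gaussianPDF 0 1 ((rotL n c s) z j) = ∏ j, gaussianPDF 0 1 (z j) := by
  rw [Fintype.prod_sum_type, Fintype.prod_sum_type (fun j => gaussianPDF 0 1 (z j)),
    ← Finset.prod_mul_distrib, ← Finset.prod_mul_distrib]
  exact Finset.prod_congr rfl fun i _ => gaussianPDF_rot hcs _ _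

theorem map_rotL {n : ℕ} {c s : ℝ} (hcs : c ^ 2 + s ^ 2 = 1) :
    Measure.map (rotL n c s) (Measure.pi fun _ : Fin n ⊕ Fin n => gaussianReal 0 1)
      = Measure.pi fun _ : Fin n ⊕ Fin n => gaussianReal 0 1 := by
  have hmeas := rotL_measurable n c s
  have hdet2 : LinearMap.det (rotL n c s) * LinearMap.det (rotL n c s) = 1 := by
    rw [← LinearMap.det_comp, rotL_invol hcs, LinearMap.det_id]
  have hdet : LinearMap.det (rotL n c s) ≠ 0 := by
    intro h; rw [h, mul_zero] at hdet2; exact zero_ne_one hdet2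
  have habs : ENNReal.ofReal |(LinearMap.det (rotL n c s))⁻¹| = 1 := by
    rcases mul_self_eq_one_iff.mp hdet2 with h | h <;> rw [h] <;> norm_num
  have hvol : Measure.map (rotL n c s) (volume : Measure ((Fin n ⊕ Fin n) → ℝ)) = volume := by
    rw [Real.map_linearMap_volume_pi_eq_smul_volume_pi hdet, habs, one_smul]
  set D := fun z : (Fin n ⊕ Fin n) → ℝ => ∏ j, gaussianPDF 0 1 (z j) with hD
  have hDmeas : Measurable D :=
    Finset.measurable_prod _ fun j _ => (measurable_gaussianPDF _ _).comp (measurable_pi_apply j)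
  rw [pi_gauss_withDensity, ← volume_pi]
  ext A hA
  rw [Measure.map_apply hmeas hA, withDensity_apply _ (hmeas hA), withDensity_apply _ hA,
    ← lintegral_indicator (hmeas hA), ← lintegral_indicator hA]
  have h2 : ∀ z, ((rotL n c s) ⁻¹' A).indicator D z = (A.indicator D) ((rotL n c s) z) := by
    intro z
    by_cases hz : (rotL n c s) z ∈ A
    · rw [Set.indicator_of_mem hz, Set.indicator_of_mem (Set.mem_preimage.mpr hz)]
      exact (density_rot hcs z).symm
    · have hz' : z ∉ (rotL n c s) ⁻¹' A := hz
      rw [Set.indicator_of_notMem hz', Set.indicator_of_notMem hz]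
  simp_rw [← hD, h2]
  rw [← lintegral_map (hDmeas.indicator hA) hmeas, hvol]

noncomputable def rotE (n : ℕ) (c s : ℝ) (hcs : c ^ 2 + s ^ 2 = 1) :
    ((Fin n ⊕ Fin n) → ℝ) ≃ᵐ ((Fin n ⊕ Fin n) → ℝ) where
  toFun := rotL n c s
  invFun := rotL n c s
  left_inv z := LinearMap.congr_fun (rotL_invol hcs) z
  right_inv z := LinearMap.congr_fun (rotL_invol hcs) z
  measurable_toFun := rotL_measurable n c s
  measurable_invFun := rotL_measurable n c s

noncomputable def rotT (n : ℕ) (c s : ℝ) (hcs : c ^ 2 + s ^ 2 = 1) :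
    ((Fin n → ℝ) × (Fin n → ℝ)) ≃ᵐ ((Fin n → ℝ) × (Fin n → ℝ)) :=
  (MeasurableEquiv.sumPiEquivProdPi (fun _ : Fin n ⊕ Fin n => ℝ)).symm.trans
    ((rotE n c s hcs).trans (MeasurableEquiv.sumPiEquivProdPi (fun _ : Fin n ⊕ Fin n => ℝ)))

theorem rotT_apply (n : ℕ) (c s : ℝ) (hcs : c ^ 2 + s ^ 2 = 1)
    (p : (Fin n → ℝ) × (Fin n → ℝ)) :
    rotT n c s hcs p
      = (fun i => c * p.1 i + s * p.2 i, fun i => s * p.1 i - c * p.2 i) := rfl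

theorem rotT_mp (n : ℕ) (c s : ℝ) (hcs : c ^ 2 + s ^ 2 = 1) :
    MeasurePreserving (rotT n c s hcs) ((gauss n).prod (gauss n))
      ((gauss n).prod (gauss n)) := by
  have h1 : MeasurePreserving (MeasurableEquiv.sumPiEquivProdPi (fun _ : Fin n ⊕ Fin n => ℝ))
      (Measure.pi fun _ : Fin n ⊕ Fin n => gaussianReal 0 1) ((gauss n).prod (gauss n)) :=
    measurePreserving_sumPiEquivProdPi (fun _ : Fin n ⊕ Fin n => gaussianReal 0 1)
  have h2 : MeasurePreserving (rotE n c s hcs)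
      (Measure.pi fun _ : Fin n ⊕ Fin n => gaussianReal 0 1)
      (Measure.pi fun _ : Fin n ⊕ Fin n => gaussianReal 0 1) :=
    ⟨rotL_measurable n c s, map_rotL hcs⟩
  exact h1.comp (h2.comp (MeasurePreserving.symm _ h1))

theorem rot_integral (n : ℕ) (c s : ℝ) (hcs : c ^ 2 + s ^ 2 = 1)
    (G : ((Fin n → ℝ) × (Fin n → ℝ)) → ℝ) :
    ∫ p, G p ∂((gauss n).prod (gauss n))
      = ∫ p, G (fun i => c * p.1 i + s * p.2 i, fun i => s * p.1 i - c * p.2 i)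
          ∂((gauss n).prod (gauss n)) := by
  rw [← (rotT_mp n c s hcs).integral_comp' G]
  exact integral_congr_ae (Filter.EventuallyEq.of_eq (funext fun p => by rw [rotT_apply]))

open MeasureTheory Real ProbabilityTheory in
instance gauss_prob (n : ℕ) : IsProbabilityMeasure (gauss n) := by
  unfold gauss; infer_instance

open MeasureTheory Real ProbabilityTheory in
theorem integrable_of_bdd {α : Type*} [MeasurableSpace α] {μ : Measure α} [IsFiniteMeasure μ]
    {g : α → ℝ} (hm : AEStronglyMeasurable g μ) (C : ℝ) (hb : ∀ x, |g x| ≤ C) :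
    Integrable g μ :=
  Integrable.mono' (integrable_const C) hm
    (Filter.Eventually.of_forall fun x => by simpa using hb x)

open MeasureTheory Real ProbabilityTheory in
theorem gCov_eq (n : ℕ) (g h : (Fin n → ℝ) → ℝ) (hg : Integrable g (gauss n))
    (hh : Integrable h (gauss n)) (hgh : Integrable (fun x => g x * h x) (gauss n)) :
    gCov n g h = gExp n (fun x => g x * h x) - gExp n g * gExp n h := by
  unfold gCov gExp
  set a := ∫ x, g x ∂gauss n
  set b := ∫ x, h x ∂gauss n
  have hexp : (fun x => (g x - a) * (h x - b))
      = fun x => g x * h x - (a * h x + (b * g x - a * b)) := by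
    funext x; ring
  have i1 : Integrable (fun x => a * h x) (gauss n) := hh.const_mul a
  have i2 : Integrable (fun x => b * g x - a * b) (gauss n) :=
    (hg.const_mul b).sub (integrable_const _)
  have i3 : Integrable (fun x => a * h x + (b * g x - a * b)) (gauss n) := i1.add i2
  rw [hexp, integral_sub hgh i3, integral_add i1 i2,
    integral_sub (hg.const_mul b) (integrable_const _), integral_const_mul, integral_const_mul,
    integral_const]
  simp only [measure_univ, probReal_univ, ENNReal.toReal_one, one_smul, smul_eq_mul]
  ring

open MeasureTheory Real ProbabilityTheory in
theorem abs_indicator_one_le {α : Type*} (A : Set α) (x : α) :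
    |Set.indicator A (1 : α → ℝ) x| ≤ 1 := by
  by_cases hx : x ∈ A
  · rw [Set.indicator_of_mem hx]; norm_num
  · rw [Set.indicator_of_notMem hx]; norm_num

open MeasureTheory Real ProbabilityTheory in
theorem halfspace_measurableSet {n : ℕ} (a : Fin n → ℝ) (b : ℝ) :
    MeasurableSet {x : Fin n → ℝ | ∑ i, x i * a i ≤ b} :=
  measurableSet_le (Finset.measurable_sum _ fun i _ => (measurable_pi_apply i).mul_const _)
    measurable_const

open MeasureTheory Real ProbabilityTheory in
theorem stmt5 (n : ℕ) (f : (Fin n → ℝ) → ℝ) (t δ : ℝ) (hf : Measurable f)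
    (hrange : ∀ x, f x ∈ Set.Icc (0:ℝ) 1) (ht : 0 < t)
    (h : ∃ A : Set (Fin n → ℝ), IsHalfspace A ∧
      gCov n (ou n t f) (Set.indicator A 1) ≥ δ) :
    ∃ A' : Set (Fin n → ℝ), IsHalfspace A' ∧
      gCov n f (Set.indicator A' 1) ≥ δ := by
  classical
  obtain ⟨A, ⟨a, b, hAeq⟩, hA⟩ := h
  set c := Real.exp (-t) with hc_def
  set s := Real.sqrt (1 - Real.exp (-2*t)) with hs_def
  have hc : 0 < c := Real.exp_pos _
  have hs2 : s ^ 2 = 1 - Real.exp (-2*t) := Real.sq_sqrt (by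
    have h1 : Real.exp (-2*t) < 1 := by
      rw [Real.exp_lt_one_iff]; linarith
    linarith)
  have hcs : c ^ 2 + s ^ 2 = 1 := by
    have h2 : c ^ 2 = Real.exp (-2*t) := by
      rw [hc_def, pow_two, ← Real.exp_add]; congr 1; ring
    rw [h2, hs2]; ring
  -- the family of halfspaces
  set β : (Fin n → ℝ) → ℝ := fun y => (b - s * ∑ i, y i * a i) / c with hβ
  set A' : (Fin n → ℝ) → Set (Fin n → ℝ) := fun y => {x | ∑ i, x i * a i ≤ β y} with hA'
  have hmem : ∀ x y : Fin n → ℝ, ((fun i => c * x i + s * y i) ∈ A) ↔ x ∈ A' y := by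
    intro x y
    rw [hAeq]
    simp only [Set.mem_setOf_eq, hA', hβ]
    have hsum : ∑ i, (c * x i + s * y i) * a i
        = c * (∑ i, x i * a i) + s * (∑ i, y i * a i) := by
      rw [Finset.mul_sum, Finset.mul_sum, ← Finset.sum_add_distrib]
      exact Finset.sum_congr rfl fun i _ => by ring
    rw [hsum, le_div_iff₀ hc]
    constructor <;> intro hle <;> linarith
  set indA := Set.indicator A (1 : (Fin n → ℝ) → ℝ) with hindA
  have hAm : MeasurableSet A := hAeq ▸ halfspace_measurableSet a b
  have hA'm : ∀ y, MeasurableSet (A' y) := fun y => halfspace_measurableSet a (β y)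
  have hindAmeas : Measurable indA := measurable_one.indicator hAm
  set Φ : ((Fin n → ℝ) × (Fin n → ℝ)) → ℝ :=
    fun p => indA (fun i => c * p.1 i + s * p.2 i) with hΦ
  have hmapmeas : Measurable fun p : (Fin n → ℝ) × (Fin n → ℝ) =>
      (fun i => c * p.1 i + s * p.2 i : Fin n → ℝ) :=
    measurable_pi_lambda _ fun i =>
      (measurable_const.mul ((measurable_pi_apply i).comp measurable_fst)).add
        (measurable_const.mul ((measurable_pi_apply i).comp measurable_snd))
  have hΦmeas : Measurable Φ := hindAmeas.comp hmapmeas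
  have hΦind : ∀ x y, Φ (x, y) = Set.indicator (A' y) (1 : (Fin n → ℝ) → ℝ) x := by
    intro x y
    by_cases hx : x ∈ A' y
    · rw [hΦ]
      simp only
      rw [hindA, Set.indicator_of_mem ((hmem x y).mpr hx), Set.indicator_of_mem hx]
      rfl
    · rw [hΦ]
      simp only
      rw [hindA, Set.indicator_of_notMem (fun hmm => hx ((hmem x y).mp hmm)),
        Set.indicator_of_notMem hx]
  have hfabs : ∀ x, |f x| ≤ 1 := fun x =>
    abs_le.mpr ⟨by linarith [(hrange x).1], (hrange x).2⟩
  -- integrability helper on the product space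
  have hbint : ∀ g : ((Fin n → ℝ) × (Fin n → ℝ)) → ℝ, Measurable g → (∀ p, |g p| ≤ 1) →
      Integrable g ((gauss n).prod (gauss n)) := fun g hm hb => integrable_of_bdd hm.aestronglyMeasurable 1 hb
  have habs_mul : ∀ x y : ℝ, |x| ≤ 1 → |y| ≤ 1 → |x * y| ≤ 1 := by
    intro x y hx hy
    rw [abs_mul]
    exact mul_le_one₀ hx (abs_nonneg _) hy
  -- F p = f (c p.1 + s p.2)
  set F : ((Fin n → ℝ) × (Fin n → ℝ)) → ℝ :=
    fun p => f (fun i => c * p.1 i + s * p.2 i) with hF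
  have hFmeas : Measurable F := hf.comp hmapmeas
  have hFabs : ∀ p, |F p| ≤ 1 := fun p => hfabs _
  have hou_eq : ou n t f = fun x => ∫ y, F (x, y) ∂(gauss n) := rfl
  have hou_sm : StronglyMeasurable (ou n t f) := by
    rw [hou_eq]
    exact hFmeas.stronglyMeasurable.integral_prod_right'
  have hou_abs : ∀ x, |ou n t f x| ≤ 1 := by
    intro x
    rw [hou_eq]
    rw [← Real.norm_eq_abs]
    calc ‖∫ y, F (x, y) ∂(gauss n)‖ ≤ 1 * ((gauss n) Set.univ).toReal :=
          norm_integral_le_of_norm_le_const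
            (Filter.Eventually.of_forall fun y => by
              rw [Real.norm_eq_abs]; exact hFabs (x, y))
      _ = 1 := by simp [measure_univ]
  -- rotation computations
  have hrotF : (fun p : (Fin n → ℝ) × (Fin n → ℝ) =>
      F (fun i => c * p.1 i + s * p.2 i, fun i => s * p.1 i - c * p.2 i)) = fun p => f p.1 := by
    funext p
    rw [hF]
    simp only
    congr 1
    funext i
    linear_combination p.1 i * hcs
  have hrotInd : (fun p : (Fin n → ℝ) × (Fin n → ℝ) =>
      indA ((fun i => c * p.1 i + s * p.2 i, fun i => s * p.1 i - c * p.2 i) :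
        (Fin n → ℝ) × (Fin n → ℝ)).1) = Φ := by
    funext p
    rfl
  -- Step A : gExp (ou) = gExp f
  have hfst_int : Integrable (fun p : (Fin n → ℝ) × (Fin n → ℝ) => f p.1) ((gauss n).prod (gauss n)) :=
    hbint _ (hf.comp measurable_fst) fun p => hfabs _
  have hfst : ∫ p, f p.1 ∂((gauss n).prod (gauss n)) = gExp n f := by
    rw [integral_prod _ hfst_int]
    unfold gExp
    exact integral_congr_ae (Filter.Eventually.of_forall fun x => by
      simp [measure_univ])
  have hFint : Integrable F ((gauss n).prod (gauss n)) := hbint F hFmeas hFabs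
  have hstepA : gExp n (ou n t f) = gExp n f := by
    unfold gExp
    rw [hou_eq]
    rw [← integral_prod _ hFint]
    rw [rot_integral n c s hcs F, hrotF, hfst]
    rfl
  -- Step B
  set u : (Fin n → ℝ) → ℝ := fun y => ∫ x, f x * Φ (x, y) ∂(gauss n) with hu
  set v : (Fin n → ℝ) → ℝ := fun y => ∫ x, Φ (x, y) ∂(gauss n) with hv
  have hGint : Integrable (fun p : (Fin n → ℝ) × (Fin n → ℝ) => F p * indA p.1) ((gauss n).prod (gauss n)) :=
    hbint _ (hFmeas.mul (hindAmeas.comp measurable_fst))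
      (fun p => habs_mul _ _ (hFabs p) (abs_indicator_one_le A p.1))
  have hfΦint : Integrable (fun p : (Fin n → ℝ) × (Fin n → ℝ) => f p.1 * Φ p) ((gauss n).prod (gauss n)) :=
    hbint _ ((hf.comp measurable_fst).mul hΦmeas)
      (fun p => habs_mul _ _ (hfabs p.1) (by rw [hΦ]; exact abs_indicator_one_le A _))
  have hstepB : gExp n (fun x => ou n t f x * indA x) = ∫ y, u y ∂(gauss n) := by
    unfold gExp
    have h1 : ∀ x, ou n t f x * indA x = ∫ y, F (x, y) * indA x ∂(gauss n) := by
      intro x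
      rw [hou_eq]
      exact (integral_mul_const (indA x) _).symm
    rw [integral_congr_ae (Filter.Eventually.of_forall fun x => h1 x)]
    rw [← integral_prod _ hGint,
      rot_integral n c s hcs (fun p => F p * indA p.1)]
    have h2 : (fun p : (Fin n → ℝ) × (Fin n → ℝ) =>
        F (fun i => c * p.1 i + s * p.2 i, fun i => s * p.1 i - c * p.2 i)
          * indA ((fun i => c * p.1 i + s * p.2 i, fun i => s * p.1 i - c * p.2 i) :
            (Fin n → ℝ) × (Fin n → ℝ)).1)
        = fun p => f p.1 * Φ p := by
      funext p
      rw [congrFun hrotF p, congrFun hrotInd p]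
    rw [h2, integral_prod_symm _ hfΦint]
  -- Step C
  have hindfst_int : Integrable (fun p : (Fin n → ℝ) × (Fin n → ℝ) => indA p.1) ((gauss n).prod (gauss n)) :=
    hbint _ (hindAmeas.comp measurable_fst) fun p => abs_indicator_one_le A _
  have hΦint : Integrable Φ ((gauss n).prod (gauss n)) := hbint Φ hΦmeas fun p => by
    rw [hΦ]; exact abs_indicator_one_le A _
  have hstepC : gExp n indA = ∫ y, v y ∂(gauss n) := by
    unfold gExp
    have h1 : ∫ x, indA x ∂gauss n = ∫ p, indA p.1 ∂((gauss n).prod (gauss n)) := by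
      rw [integral_prod _ hindfst_int]
      exact (integral_congr_ae (Filter.Eventually.of_forall fun x => by
        simp [measure_univ])).symm
    rw [h1, rot_integral n c s hcs (fun p => indA p.1), hrotInd,
      integral_prod_symm _ hΦint]
  -- integrability of u, v and their difference
  have hu_sm : StronglyMeasurable u :=
    ((hf.comp measurable_fst).mul hΦmeas).stronglyMeasurable.integral_prod_left'
  have hv_sm : StronglyMeasurable v := hΦmeas.stronglyMeasurable.integral_prod_left'
  have habs_int : ∀ g : (Fin n → ℝ) → ℝ, (∀ x, |g x| ≤ 1) →
      AEStronglyMeasurable g (gauss n) → ∀ y : Fin n → ℝ, True := fun _ _ _ _ => trivial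
  have hint_le_one : ∀ g : (Fin n → ℝ) → ℝ, (∀ x, |g x| ≤ 1) → |∫ x, g x ∂(gauss n)| ≤ 1 := by
    intro g hb
    rw [← Real.norm_eq_abs]
    calc ‖∫ x, g x ∂(gauss n)‖ ≤ 1 * ((gauss n) Set.univ).toReal :=
          norm_integral_le_of_norm_le_const
            (Filter.Eventually.of_forall fun x => by rw [Real.norm_eq_abs]; exact hb x)
      _ = 1 := by simp [measure_univ]
  have hu_abs : ∀ y, |u y| ≤ 1 := fun y => hint_le_one _
    (fun x => habs_mul _ _ (hfabs x) (by rw [hΦ]; exact abs_indicator_one_le A _))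
  have hv_abs : ∀ y, |v y| ≤ 1 := fun y => hint_le_one _
    (fun x => by rw [hΦ]; exact abs_indicator_one_le A _)
  have hu_int : Integrable u (gauss n) := integrable_of_bdd hu_sm.aestronglyMeasurable 1 hu_abs
  have hv_int : Integrable v (gauss n) := integrable_of_bdd hv_sm.aestronglyMeasurable 1 hv_abs
  -- expand the covariance hypothesis
  have hou_int : Integrable (ou n t f) (gauss n) :=
    integrable_of_bdd hou_sm.aestronglyMeasurable 1 hou_abs
  have hindA_int : Integrable indA (gauss n) :=
    integrable_of_bdd hindAmeas.aestronglyMeasurable 1 (abs_indicator_one_le A)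
  have houind_int : Integrable (fun x => ou n t f x * indA x) (gauss n) :=
    integrable_of_bdd (hou_sm.mul hindAmeas.stronglyMeasurable).aestronglyMeasurable 1
      (fun x => habs_mul _ _ (hou_abs x) (abs_indicator_one_le A x))
  have hcov : gCov n (ou n t f) indA = ∫ y, (u y - gExp n f * v y) ∂(gauss n) := by
    rw [gCov_eq n _ _ hou_int hindA_int houind_int, hstepA, hstepB, hstepC,
      ← integral_const_mul, ← integral_sub hu_int (hv_int.const_mul _)]
  -- per-y covariance
  have hf_int : Integrable f (gauss n) := integrable_of_bdd hf.aestronglyMeasurable 1 hfabs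
  have hcov_y : ∀ y, gCov n f (Set.indicator (A' y) 1) = u y - gExp n f * v y := by
    intro y
    have hindm : Measurable (Set.indicator (A' y) (1 : (Fin n → ℝ) → ℝ)) :=
      measurable_one.indicator (hA'm y)
    have hind_int : Integrable (Set.indicator (A' y) (1 : (Fin n → ℝ) → ℝ)) (gauss n) :=
      integrable_of_bdd hindm.aestronglyMeasurable 1 (abs_indicator_one_le _)
    have hfind_int : Integrable (fun x => f x * Set.indicator (A' y) 1 x) (gauss n) :=
      integrable_of_bdd (hf.mul hindm).aestronglyMeasurable 1
        (fun x => habs_mul _ _ (hfabs x) (abs_indicator_one_le _ x))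
    rw [gCov_eq n _ _ hf_int hind_int hfind_int]
    have e1 : gExp n (fun x => f x * Set.indicator (A' y) 1 x) = u y := by
      unfold gExp
      exact integral_congr_ae (Filter.Eventually.of_forall fun x => by
        show f x * (A' y).indicator 1 x = f x * Φ (x, y)
        rw [hΦind x y])
    have e2 : gExp n (Set.indicator (A' y) 1) = v y := by
      unfold gExp
      exact integral_congr_ae (Filter.Eventually.of_forall fun x => by
        show (A' y).indicator 1 x = Φ (x, y)
        rw [hΦind x y])
    rw [e1, e2]
  set w : (Fin n → ℝ) → ℝ := fun y => u y - gExp n f * v y with hw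
  have hw_int : Integrable w (gauss n) := hu_int.sub (hv_int.const_mul _)
  have hge : δ ≤ ∫ y, w y ∂(gauss n) := by rw [← hcov]; exact hA
  by_contra hcon
  push_neg at hcon
  have hwlt : ∀ y, w y < δ := by
    intro y
    have h1 := hcon (A' y) ⟨a, β y, by rw [hA']⟩
    rw [hcov_y y] at h1
    exact h1
  have h0 : ∀ y, 0 ≤ δ - w y := fun y => by linarith [hwlt y]
  have hint : Integrable (fun y => δ - w y) (gauss n) := (integrable_const δ).sub hw_int
  have hz : ∫ y, (δ - w y) ∂(gauss n) = 0 := by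
    refine le_antisymm ?_ (integral_nonneg h0)
    rw [integral_sub (integrable_const δ) hw_int, integral_const]
    simp only [measure_univ, probReal_univ, ENNReal.toReal_one, one_smul, smul_eq_mul]
    linarith
  have hae := (integral_eq_zero_iff_of_nonneg h0 hint).mp hz
  have huniv : (gauss n) Set.univ = 0 := by
    refine measure_mono_null (fun y _ => ?_) (by simpa [Filter.EventuallyEq, ae_iff] using hae)
    exact ne_of_gt (by linarith [hwlt y])
  simp [measure_univ] at huniv
end
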